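/- Let G be an n-vertex graph such that α₁(G) + τ_B(G) > n²/4 while every proper induced subgraph H of G satisfies α₁(H) + τ_B(H) ≤ |V(H)|²/4 (i.e., G is a minimal counterexample to the conjecture α₁ + τ_B ≤ n²/4). If S is a nonempty proper subset of V(G) such that the induced subgraph G[S] has independence number t, then |[S, S̄]| > (|S| − 2t)(n − |S|). -/

import Mathlib

open Finset

/-- `A` is a triangle-independent set of edges of `G`: it consists of edges of `G`
and contains at most one edge from each triangle of `G`. -/
def TriIndep {V : Type*} (G : SimpleGraph V) (A : Finset (Sym2 V)) : Prop :=
  (A : Set (Sym2 V)) ⊆ G.edgeSet ∧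
    ∀ x y z : V, G.Adj x y → G.Adj y z → G.Adj x z →
      ¬(s(x, y) ∈ A ∧ s(y, z) ∈ A)

/-- `α₁ G`: the maximum size of a triangle-independent set of edges of `G`. -/
noncomputable def alpha1 {V : Type*} [Fintype V] (G : SimpleGraph V) : ℕ :=
  sSup {k | ∃ A : Finset (Sym2 V), TriIndep G A ∧ A.card = k}

/-- `τ G`: the minimum size of a set of edges whose deletion makes `G` triangle-free. -/
noncomputable def tau {V : Type*} [Fintype V] (G : SimpleGraph V) : ℕ :=
  sInf {k | ∃ X : Finset (Sym2 V), (X : Set (Sym2 V)) ⊆ G.edgeSet ∧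
    (G.deleteEdges (X : Set (Sym2 V))).CliqueFree 3 ∧ X.card = k}

/-- `τ_B G`: the minimum size of a set of edges whose deletion makes `G` bipartite. -/
noncomputable def tauB {V : Type*} [Fintype V] (G : SimpleGraph V) : ℕ :=
  sInf {k | ∃ X : Finset (Sym2 V), (X : Set (Sym2 V)) ⊆ G.edgeSet ∧
    (G.deleteEdges (X : Set (Sym2 V))).Colorable 2 ∧ X.card = k}

open scoped Classical in
/-- The edge cut `[S, S̄]`: the set of edges of `G` with one endpoint in `S`
and the other outside `S`. -/
noncomputable def edgeCut {V : Type*} [Fintype V] (G : SimpleGraph V) (S : Finset V) :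
    Finset (Sym2 V) :=
  G.edgeFinset.filter (fun e => ∃ x ∈ S, ∃ y ∉ S, e = s(x, y))

open scoped Classical in
/-- The number of edges of `G`. -/
noncomputable def edgeCount {V : Type*} [Fintype V] (G : SimpleGraph V) : ℕ :=
  G.edgeFinset.card

/-- The independence number of `G`. -/
noncomputable def indepNum {V : Type*} [Fintype V] (G : SimpleGraph V) : ℕ :=
  sSup {k | ∃ I : Finset V, (∀ x ∈ I, ∀ y ∈ I, ¬G.Adj x y) ∧ I.card = k}

/-- `K₄⁻`: the complete graph on 4 vertices with one edge deleted. -/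
def K4minus : SimpleGraph (Fin 4) := (SimpleGraph.completeGraph (Fin 4)).deleteEdges {s(0, 1)}

section Aux
open scoped Classical
variable {V : Type*} [Fintype V] {G : SimpleGraph V}

lemma triIndep_empty (G : SimpleGraph V) : TriIndep G (∅ : Finset (Sym2 V)) :=
  ⟨by simp, by simp⟩

lemma alpha1_bddAbove (G : SimpleGraph V) :
    BddAbove {k | ∃ A : Finset (Sym2 V), TriIndep G A ∧ A.card = k} := by
  refine ⟨G.edgeFinset.card, ?_⟩
  rintro k ⟨A, ⟨hsub, -⟩, rfl⟩
  exact Finset.card_le_card fun e he => SimpleGraph.mem_edgeFinset.mpr (hsub (Finset.mem_coe.mpr he))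

lemma le_alpha1 {A : Finset (Sym2 V)} (hA : TriIndep G A) : A.card ≤ alpha1 G :=
  le_csSup (alpha1_bddAbove G) ⟨A, hA, rfl⟩

lemma alpha1_exists (G : SimpleGraph V) :
    ∃ A : Finset (Sym2 V), TriIndep G A ∧ A.card = alpha1 G := by
  have hne : {k | ∃ A : Finset (Sym2 V), TriIndep G A ∧ A.card = k}.Nonempty :=
    ⟨0, ∅, triIndep_empty G, by simp⟩
  exact Nat.sSup_mem hne (alpha1_bddAbove G)

lemma tauB_exists (G : SimpleGraph V) :
    ∃ X : Finset (Sym2 V), (X : Set (Sym2 V)) ⊆ G.edgeSet ∧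
      (G.deleteEdges (X : Set (Sym2 V))).Colorable 2 ∧ X.card = tauB G := by
  have hne : {k | ∃ X : Finset (Sym2 V), (X : Set (Sym2 V)) ⊆ G.edgeSet ∧
      (G.deleteEdges (X : Set (Sym2 V))).Colorable 2 ∧ X.card = k}.Nonempty := by
    have h : ∀ a b : V, ¬ (G.deleteEdges ((G.edgeFinset : Finset (Sym2 V)) : Set (Sym2 V))).Adj a b := by
      intro a b hab
      rw [SimpleGraph.deleteEdges_adj] at hab
      exact absurd (by simpa using hab.1) (by simpa using hab.2)
    have hcol : (G.deleteEdges ((G.edgeFinset : Finset (Sym2 V)) : Set (Sym2 V))).Colorable 2 :=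
      ⟨SimpleGraph.Coloring.mk (fun _ => (0 : Fin 2)) (fun {a b} hab => absurd hab (h a b))⟩
    exact ⟨G.edgeFinset.card, G.edgeFinset, by simp, hcol, rfl⟩
  exact Nat.sInf_mem hne

lemma tauB_le {X : Finset (Sym2 V)} (h1 : (X : Set (Sym2 V)) ⊆ G.edgeSet)
    (h2 : (G.deleteEdges (X : Set (Sym2 V))).Colorable 2) : tauB G ≤ X.card :=
  Nat.sInf_le ⟨X, h1, h2, rfl⟩

lemma le_indepNum {I : Finset V} (hI : ∀ x ∈ I, ∀ y ∈ I, ¬G.Adj x y) :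
    I.card ≤ indepNum G := by
  refine le_csSup ⟨Fintype.card V, ?_⟩ ⟨I, hI, rfl⟩
  rintro k ⟨J, -, rfl⟩
  simpa using Finset.card_le_univ J

lemma card_le_alpha1_induce (s : Set V) [Fintype s] (A : Finset (Sym2 V))
    (hA : TriIndep G A) (hmem : ∀ e ∈ A, ∀ x ∈ e, x ∈ s) :
    A.card ≤ alpha1 (G.induce s) := by
  set A' : Finset (Sym2 s) :=
    (G.induce s).edgeFinset.filter (fun e => Sym2.map (Subtype.val) e ∈ A) with hA'
  have hcard : A'.card = A.card := by
    apply Finset.card_bij (fun e _ => Sym2.map Subtype.val e)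
    · intro e he; exact (Finset.mem_filter.mp he).2
    · intro e1 h1 e2 h2 h
      exact Sym2.map.injective Subtype.val_injective h
    · intro e he
      induction e using Sym2.ind with
      | _ a b =>
        have ha : a ∈ s := hmem _ he a (by simp)
        have hb : b ∈ s := hmem _ he b (by simp)
        have hadj : G.Adj a b := (SimpleGraph.mem_edgeSet G).mp (hA.1 (Finset.mem_coe.mpr he))
        refine ⟨s(⟨a, ha⟩, ⟨b, hb⟩), ?_, by simp [Sym2.map_pair_eq]⟩
        rw [hA', Finset.mem_filter]
        refine ⟨SimpleGraph.mem_edgeFinset.mpr ?_, by simpa [Sym2.map_pair_eq] using he⟩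
        exact (SimpleGraph.mem_edgeSet _).mpr (SimpleGraph.comap_adj.mpr hadj)
  have hind : TriIndep (G.induce s) A' := by
    constructor
    · intro e he
      rw [hA'] at he
      exact SimpleGraph.mem_edgeFinset.mp (Finset.mem_filter.mp he).1
    · intro x y z hxy hyz hxz ⟨h1, h2⟩
      have h1' : s(x.1, y.1) ∈ A := by
        have := (Finset.mem_filter.mp h1).2
        simpa [Sym2.map_pair_eq] using this
      have h2' : s(y.1, z.1) ∈ A := by
        have := (Finset.mem_filter.mp h2).2
        simpa [Sym2.map_pair_eq] using this
      exact hA.2 x.1 y.1 z.1 (SimpleGraph.comap_adj.mp hxy) (SimpleGraph.comap_adj.mp hyz)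
        (SimpleGraph.comap_adj.mp hxz) ⟨h1', h2'⟩
  calc A.card = A'.card := hcard.symm
    _ ≤ alpha1 (G.induce s) := le_alpha1 hind

lemma card_le_indepNum_induce (s : Set V) [Fintype s] (I : Finset V)
    (hIs : ∀ x ∈ I, x ∈ s) (hind : ∀ x ∈ I, ∀ y ∈ I, ¬G.Adj x y) :
    I.card ≤ indepNum (G.induce s) := by
  set I' : Finset s := I.attach.map ⟨fun x => (⟨x.1, hIs _ x.2⟩ : s),
    fun a b h => Subtype.ext (by simpa using congrArg Subtype.val h)⟩ with hI'
  have hcard : I'.card = I.card := by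
    rw [hI', Finset.card_map, Finset.card_attach]
  have hindep : ∀ x ∈ I', ∀ y ∈ I', ¬(G.induce s).Adj x y := by
    intro x hx y hy hadj
    rw [hI', Finset.mem_map] at hx hy
    obtain ⟨a, -, rfl⟩ := hx
    obtain ⟨b, -, rfl⟩ := hy
    exact hind a.1 a.2 b.1 b.2 (SimpleGraph.comap_adj.mp hadj)
  calc I.card = I'.card := hcard.symm
    _ ≤ indepNum (G.induce s) := le_indepNum hindep

lemma triIndep_subset {A B : Finset (Sym2 V)} (hBA : B ⊆ A) (hA : TriIndep G A) :
    TriIndep G B := by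
  refine ⟨fun e he => hA.1 (hBA (Finset.mem_coe.mp he)), ?_⟩
  intro x y z hxy hyz hxz ⟨h1, h2⟩
  exact hA.2 x y z hxy hyz hxz ⟨hBA h1, hBA h2⟩

lemma cut_rep_unique {S : Finset V} {a b x y : V} (ha : a ∈ S) (hb : b ∉ S)
    (hx : x ∈ S) (hy : y ∉ S) (h : s(a, b) = s(x, y)) : a = x ∧ b = y := by
  rw [Sym2.eq_iff] at h
  rcases h with ⟨h1, h2⟩ | ⟨h1, h2⟩
  · exact ⟨h1, h2⟩
  · exact absurd (h1 ▸ ha) hy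

lemma mapped_mem_edgeSet {s : Set V} {e : Sym2 s}
    (he : e ∈ (G.induce s).edgeSet) : Sym2.map Subtype.val e ∈ G.edgeSet := by
  induction e using Sym2.ind with
  | _ a b =>
    rw [Sym2.map_pair_eq]
    exact (SimpleGraph.mem_edgeSet G).mpr (SimpleGraph.comap_adj.mp
      ((SimpleGraph.mem_edgeSet _).mp he))

end Aux

/-- If `G` is a minimal counterexample to the conjecture `α₁ + τ_B ≤ n²/4` and `S` is a
nonempty proper vertex subset such that `G[S]` has independence number `t`, then
`|[S, S̄]| > (|S| − 2t)(n − |S|)`. -/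
theorem stmt9 {V : Type*} [Fintype V] (G : SimpleGraph V) (n : ℕ)
    (hn : Fintype.card V = n)
    (hctx : (alpha1 G + tauB G : ℝ) > n ^ 2 / 4)
    (hmin : ∀ S : Finset V, S ≠ Finset.univ →
      (alpha1 (G.induce (S : Set V)) + tauB (G.induce (S : Set V)) : ℝ) ≤
        (S.card : ℝ) ^ 2 / 4)
    (S : Finset V) (hS : S.Nonempty) (hSu : S ≠ Finset.univ)
    (t : ℕ) (ht : indepNum (G.induce (S : Set V)) = t) :
    ((edgeCut G S).card : ℝ) > ((S.card : ℝ) - 2 * t) * ((n : ℝ) - S.card) := by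
  classical
  set Sc : Finset V := Sᶜ with hSc
  have hScu : Sc ≠ Finset.univ := fun h => hS.ne_empty ((Finset.compl_eq_univ_iff S).mp h)
  have hcards : S.card + Sc.card = n := by rw [hSc, Finset.card_add_card_compl, hn]
  have hmS := hmin S hSu
  have hmT := hmin Sc hScu
  -- alpha1 decomposition
  obtain ⟨A, hAind, hAcard⟩ := alpha1_exists G
  set p1 : Sym2 V → Prop := fun e => ∀ x ∈ e, x ∈ S with hp1
  set p2 : Sym2 V → Prop := fun e => ∀ x ∈ e, x ∉ S with hp2
  set A1 := A.filter p1 with hA1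
  set A2 := A.filter p2 with hA2
  set A3 := A.filter (fun e => ¬ p1 e ∧ ¬ p2 e) with hA3
  have hsplit : A.card ≤ A1.card + A2.card + A3.card := by
    have hsub : A ⊆ A1 ∪ A2 ∪ A3 := by
      intro e he
      by_cases h1 : p1 e
      · exact Finset.mem_union_left _ (Finset.mem_union_left _ (Finset.mem_filter.mpr ⟨he, h1⟩))
      by_cases h2 : p2 e
      · exact Finset.mem_union_left _ (Finset.mem_union_right _ (Finset.mem_filter.mpr ⟨he, h2⟩))
      · exact Finset.mem_union_right _ (Finset.mem_filter.mpr ⟨he, h1, h2⟩)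
    calc A.card ≤ (A1 ∪ A2 ∪ A3).card := Finset.card_le_card hsub
      _ ≤ (A1 ∪ A2).card + A3.card := Finset.card_union_le _ _
      _ ≤ A1.card + A2.card + A3.card := add_le_add_left (Finset.card_union_le _ _) _
  have hA1le : A1.card ≤ alpha1 (G.induce (S : Set V)) := by
    refine card_le_alpha1_induce _ _ (triIndep_subset (Finset.filter_subset _ _) hAind) ?_
    intro e he x hx
    exact (Finset.mem_filter.mp he).2 x hx
  have hA2le : A2.card ≤ alpha1 (G.induce (Sc : Set V)) := by
    refine card_le_alpha1_induce _ _ (triIndep_subset (Finset.filter_subset _ _) hAind) ?_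
    intro e he x hx
    have := (Finset.mem_filter.mp he).2 x hx
    simpa [hSc] using this
  have hA3le : A3.card ≤ Sc.card * t := by
    have hsub : A3 ⊆ Sc.biUnion
        (fun v => (S.filter (fun u => s(u, v) ∈ A)).image (fun u => s(u, v))) := by
      intro e he
      induction e using Sym2.ind with
      | _ a b =>
        obtain ⟨heA, h1, h2⟩ := Finset.mem_filter.mp he
        simp only [hp1] at h1; simp only [hp2] at h2
        push_neg at h1 h2
        obtain ⟨x, hxe, hxS⟩ := h1
        obtain ⟨y, hye, hyS⟩ := h2
        by_cases haS : a ∈ S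
        · have hbS : b ∉ S := by
            rcases Sym2.mem_iff.mp hxe with rfl | rfl
            · exact absurd haS hxS
            · exact hxS
          refine Finset.mem_biUnion.mpr ⟨b, by simp [hSc, hbS], ?_⟩
          exact Finset.mem_image.mpr ⟨a, Finset.mem_filter.mpr ⟨haS, heA⟩, rfl⟩
        · have hbS : b ∈ S := by
            rcases Sym2.mem_iff.mp hye with rfl | rfl
            · exact absurd hyS haS
            · exact hyS
          refine Finset.mem_biUnion.mpr ⟨a, by simp [hSc, haS], ?_⟩
          refine Finset.mem_image.mpr ⟨b, Finset.mem_filter.mpr ⟨hbS, by rwa [Sym2.eq_swap]⟩, ?_⟩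
          exact Sym2.eq_swap
    calc A3.card ≤ (Sc.biUnion _).card := Finset.card_le_card hsub
      _ ≤ ∑ v ∈ Sc, ((S.filter (fun u => s(u, v) ∈ A)).image (fun u => s(u, v))).card :=
          Finset.card_biUnion_le
      _ ≤ ∑ _v ∈ Sc, t := ?_
      _ = Sc.card * t := by rw [Finset.sum_const, smul_eq_mul]
    refine Finset.sum_le_sum fun v hv => ?_
    refine le_trans Finset.card_image_le ?_
    rw [← ht]
    refine card_le_indepNum_induce _ _ (fun x hx => (Finset.mem_filter.mp hx).1) ?_
    intro x hx y hy hadj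
    obtain ⟨hxS, hxA⟩ := Finset.mem_filter.mp hx
    obtain ⟨hyS, hyA⟩ := Finset.mem_filter.mp hy
    have hxv : G.Adj x v := (SimpleGraph.mem_edgeSet G).mp (hAind.1 hxA)
    have hyv : G.Adj y v := (SimpleGraph.mem_edgeSet G).mp (hAind.1 hyA)
    exact hAind.2 x v y hxv hyv.symm hadj ⟨hxA, by rwa [Sym2.eq_swap]⟩
  have halphaN : alpha1 G ≤ alpha1 (G.induce (S : Set V)) + alpha1 (G.induce (Sc : Set V))
      + Sc.card * t := by
    rw [← hAcard]
    exact hsplit.trans (add_le_add (add_le_add hA1le hA2le) hA3le)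
  -- tauB decomposition
  obtain ⟨XS, hXSsub, hXScol, hXScard⟩ := tauB_exists (G.induce (S : Set V))
  obtain ⟨XT, hXTsub, hXTcol, hXTcard⟩ := tauB_exists (G.induce (Sc : Set V))
  obtain ⟨cS⟩ := hXScol
  obtain ⟨cT⟩ := hXTcol
  set fS : V → Fin 2 := fun w => if h : w ∈ (S : Set V) then cS ⟨w, h⟩ else 0 with hfS
  set fT : V → Fin 2 := fun w => if h : w ∈ (Sc : Set V) then cT ⟨w, h⟩ else 0 with hfT
  have hfSval : ∀ (w : V) (hw : w ∈ S), fS w = cS ⟨w, hw⟩ := by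
    intro w hw; rw [hfS]; exact dif_pos hw
  have hfTval : ∀ (w : V) (hw : w ∈ Sc), fT w = cT ⟨w, hw⟩ := by
    intro w hw; rw [hfT]; exact dif_pos hw
  set cut := edgeCut G S with hcutdef
  have hcutmem : ∀ a b : V, a ∈ S → b ∉ S → G.Adj a b → s(a, b) ∈ cut := by
    intro a b ha hb hadj
    rw [hcutdef, edgeCut, Finset.mem_filter]
    exact ⟨SimpleGraph.mem_edgeFinset.mpr ((SimpleGraph.mem_edgeSet G).mpr hadj),
      ⟨a, ha, b, hb, rfl⟩⟩
  set P : Sym2 V → Prop := fun e => ∀ x y : V, x ∈ S → y ∉ S → e = s(x, y) → fS x = fT y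
    with hP
  have key : ∀ (σ : Fin 2) (bad : Finset (Sym2 V)), bad ⊆ cut →
      (∀ a b : V, a ∈ S → b ∉ S → G.Adj a b → s(a, b) ∉ bad → fS a ≠ fT b + σ) →
      tauB G ≤ tauB (G.induce (S : Set V)) + tauB (G.induce (Sc : Set V)) + bad.card := by
    intro σ bad hbadsub hbadcol
    set XSm := XS.image (Sym2.map (Subtype.val : ↥(S : Set V) → V)) with hXSm
    set XTm := XT.image (Sym2.map (Subtype.val : ↥(Sc : Set V) → V)) with hXTm
    set Xm := XSm ∪ XTm ∪ bad with hXm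
    have hsub : (Xm : Set (Sym2 V)) ⊆ G.edgeSet := by
      intro e he
      rw [Finset.mem_coe, hXm, Finset.mem_union, Finset.mem_union] at he
      rcases he with (he | he) | he
      · obtain ⟨e', he', rfl⟩ := Finset.mem_image.mp he
        exact mapped_mem_edgeSet (hXSsub (Finset.mem_coe.mpr he'))
      · obtain ⟨e', he', rfl⟩ := Finset.mem_image.mp he
        exact mapped_mem_edgeSet (hXTsub (Finset.mem_coe.mpr he'))
      · have := hbadsub he
        rw [hcutdef, edgeCut, Finset.mem_filter] at this
        exact SimpleGraph.mem_edgeFinset.mp this.1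
    have hcol : (G.deleteEdges (Xm : Set (Sym2 V))).Colorable 2 := by
      refine ⟨SimpleGraph.Coloring.mk
        (fun w => if w ∈ S then fS w else fT w + σ) ?_⟩
      intro a b hab
      rw [SimpleGraph.deleteEdges_adj] at hab
      obtain ⟨hadj, hne⟩ := hab
      rw [Finset.mem_coe, hXm, Finset.mem_union, Finset.mem_union] at hne
      push_neg at hne
      obtain ⟨⟨hne1, hne2⟩, hne3⟩ := hne
      by_cases ha : a ∈ S <;> by_cases hb : b ∈ S
      · simp only [if_pos ha, if_pos hb]
        rw [hfSval a ha, hfSval b hb]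
        refine cS.valid ?_
        rw [SimpleGraph.deleteEdges_adj]
        refine ⟨SimpleGraph.comap_adj.mpr hadj, fun hmem => hne1 ?_⟩
        rw [hXSm]
        exact Finset.mem_image.mpr ⟨_, Finset.mem_coe.mp hmem, by rw [Sym2.map_pair_eq]⟩
      · simp only [if_pos ha, if_neg hb]
        exact hbadcol a b ha hb hadj hne3
      · simp only [if_neg ha, if_pos hb]
        intro h
        refine hbadcol b a hb ha hadj.symm ?_ h.symm
        rwa [Sym2.eq_swap]
      · simp only [if_neg ha, if_neg hb]
        have ha' : a ∈ Sc := by simp [hSc, ha]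
        have hb' : b ∈ Sc := by simp [hSc, hb]
        intro h
        have h2 : fT a = fT b := add_right_cancel h
        rw [hfTval a ha', hfTval b hb'] at h2
        refine cT.valid ?_ h2
        rw [SimpleGraph.deleteEdges_adj]
        refine ⟨SimpleGraph.comap_adj.mpr hadj, fun hmem => hne2 ?_⟩
        rw [hXTm]
        exact Finset.mem_image.mpr ⟨_, Finset.mem_coe.mp hmem, by rw [Sym2.map_pair_eq]⟩
    calc tauB G ≤ Xm.card := tauB_le hsub hcol
      _ ≤ (XSm ∪ XTm).card + bad.card := Finset.card_union_le _ _
      _ ≤ (XSm.card + XTm.card) + bad.card := add_le_add_left (Finset.card_union_le _ _) _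
      _ ≤ tauB (G.induce (S : Set V)) + tauB (G.induce (Sc : Set V)) + bad.card := by
          rw [← hXScard, ← hXTcard]
          exact add_le_add_left (add_le_add Finset.card_image_le Finset.card_image_le) _
  have hkey2 : ∃ m : ℕ, 2 * m ≤ cut.card ∧
      tauB G ≤ tauB (G.induce (S : Set V)) + tauB (G.induce (Sc : Set V)) + m := by
    have hBsum : (cut.filter P).card + (cut.filter (fun e => ¬ P e)).card = cut.card :=
      Finset.card_filter_add_card_filter_not _
    by_cases hc : (cut.filter P).card ≤ (cut.filter (fun e => ¬ P e)).card
    · refine ⟨(cut.filter P).card, by omega, key 0 _ (Finset.filter_subset _ _) ?_⟩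
      intro a b ha hb hadj hnot heq
      refine hnot (Finset.mem_filter.mpr ⟨hcutmem a b ha hb hadj, ?_⟩)
      rw [hP]
      intro x y hx hy hxy
      obtain ⟨h1, h2⟩ := cut_rep_unique ha hb hx hy hxy
      subst h1; subst h2
      simpa using heq
    · refine ⟨(cut.filter (fun e => ¬ P e)).card, by omega,
        key 1 _ (Finset.filter_subset _ _) ?_⟩
      intro a b ha hb hadj hnot
      have hPP : P s(a, b) := by
        by_contra h
        exact hnot (Finset.mem_filter.mpr ⟨hcutmem a b ha hb hadj, h⟩)
      have heq : fS a = fT b := hPP a b ha hb rfl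
      rw [heq]
      exact (by decide : ∀ x : Fin 2, x ≠ x + 1) _
  obtain ⟨m, hm1, hm2⟩ := hkey2
  -- final arithmetic
  have hcs : (S.card : ℝ) + (Sc.card : ℝ) = n := by exact_mod_cast hcards
  have h2m : (2 * m : ℝ) ≤ (cut.card : ℝ) := by exact_mod_cast hm1
  have halphaR : (alpha1 G : ℝ) ≤ (alpha1 (G.induce (S : Set V)) : ℝ)
      + (alpha1 (G.induce (Sc : Set V)) : ℝ) + (Sc.card : ℝ) * t := by
    exact_mod_cast halphaN
  have htauR : (tauB G : ℝ) ≤ (tauB (G.induce (S : Set V)) : ℝ)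
      + (tauB (G.induce (Sc : Set V)) : ℝ) + m := by exact_mod_cast hm2
  have hn2 : (n : ℝ) ^ 2 = ((S.card : ℝ)) ^ 2 + 2 * (S.card : ℝ) * (Sc.card : ℝ)
      + ((Sc.card : ℝ)) ^ 2 := by rw [← hcs]; ring
  have hnc : (n : ℝ) - (S.card : ℝ) = (Sc.card : ℝ) := by linarith
  rw [hnc]
  nlinarith [hctx, hmS, hmT, halphaR, htauR, h2m, hn2]
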